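/- The twirl is the orthogonal projection onto the commutant with respect to the trace inner product: for every complex d×d matrix x and every matrix y in the commutant (i.e., σ(s) * y = y * σ(s) for all s ∈ G), one has tr(yᴴ * (x - T(x))) = 0; equivalently, tr(yᴴ * T(x)) = tr(yᴴ * x) for all such y. -/

import Mathlib

open Matrix MeasureTheory

attribute [local instance] Matrix.normedAddCommGroup Matrix.normedSpace

/-- The twirl `T x = ∫ s, σ s * x * (σ s)ᴴ ∂μ` is the orthogonal
projection onto the commutant for the trace inner product: for every matrix `x` and
every `y` in the commutant, `tr (yᴴ * (x - T x)) = 0`. -/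
theorem twirl_orthogonal_projection (d : ℕ) (hd : 1 ≤ d)
    {G : Type*} [Group G] [TopologicalSpace G] [IsTopologicalGroup G] [CompactSpace G]
    [MeasurableSpace G] [BorelSpace G]
    (μ : Measure G) [μ.IsHaarMeasure] [IsProbabilityMeasure μ]
    (σ : G → Matrix (Fin d) (Fin d) ℂ) (hcont : Continuous σ)
    (hunitary : ∀ s : G, (σ s)ᴴ * σ s = 1)
    (hmul : ∀ s t : G, σ (s * t) = σ s * σ t)
    (x y : Matrix (Fin d) (Fin d) ℂ)
    (hy : ∀ s : G, σ s * y = y * σ s) :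
    (yᴴ * (x - ∫ s, σ s * x * (σ s)ᴴ ∂μ)).trace = 0 := by
  have hcd : Continuous fun s : G => σ s * x * (σ s)ᴴ := by
    exact ((hcont.mul continuous_const).mul (hcont.matrix_conjTranspose))
  have hint : @Integrable (Matrix (Fin d) (Fin d) ℂ) _ (SeminormedAddGroup.toContinuousENorm (E := Matrix (Fin d) (Fin d) ℂ)) G _ (fun s : G => σ s * x * (σ s)ᴴ) μ :=
    hcd.integrable_of_hasCompactSupport (HasCompactSupport.of_compactSpace _)
  let L : Matrix (Fin d) (Fin d) ℂ →ₗ[ℂ] ℂ :=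
    (Matrix.traceLinearMap (Fin d) ℂ ℂ).comp (LinearMap.mulLeft ℂ yᴴ)
  let Lc : Matrix (Fin d) (Fin d) ℂ →L[ℂ] ℂ := LinearMap.toContinuousLinearMap L
  have key : ∀ s : G, (yᴴ * (σ s * x * (σ s)ᴴ)).trace = (yᴴ * x).trace := by
    intro s
    have h1 : (σ s)ᴴ * yᴴ = yᴴ * (σ s)ᴴ := by
      calc (σ s)ᴴ * yᴴ = (y * σ s)ᴴ := by rw [conjTranspose_mul]
        _ = (σ s * y)ᴴ := by rw [hy]
        _ = yᴴ * (σ s)ᴴ := by rw [conjTranspose_mul]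
    calc (yᴴ * (σ s * x * (σ s)ᴴ)).trace
        = ((yᴴ * (σ s * x)) * (σ s)ᴴ).trace := by
          simp only [Matrix.mul_assoc]
      _ = ((σ s)ᴴ * (yᴴ * (σ s * x))).trace := trace_mul_comm _ _
      _ = ((yᴴ * ((σ s)ᴴ * σ s)) * x).trace := by
          rw [← Matrix.mul_assoc, h1, Matrix.mul_assoc yᴴ, ← Matrix.mul_assoc (σ s)ᴴ,
            ← Matrix.mul_assoc, Matrix.mul_assoc yᴴ]
      _ = (yᴴ * x).trace := by rw [hunitary, Matrix.mul_one]
  have hL : Lc (∫ s, σ s * x * (σ s)ᴴ ∂μ) = ∫ s, Lc (σ s * x * (σ s)ᴴ) ∂μ :=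
    (ContinuousLinearMap.integral_comp_comm Lc hint).symm
  have hLc : ∀ z, Lc z = (yᴴ * z).trace := fun z => rfl
  have : (yᴴ * ∫ s, σ s * x * (σ s)ᴴ ∂μ).trace = (yᴴ * x).trace := by
    rw [← hLc, hL]
    simp only [hLc, key]
    simp
  rw [Matrix.mul_sub, Matrix.trace_sub, this, sub_self]
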